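/- Let S be a compact Hausdorff space and 𝒟 ⊆ K(S). Define ∼𝒟 = {C̃ ∈ K(S) : C̃ ∩ C ≠ ∅ for all C ∈ 𝒟}. Then 𝒟 is involutive (𝒟 = ∼∼𝒟) if and only if for every compact C: C ∈ 𝒟 ⟺ every compact neighborhood C' of C is in 𝒟. -/
import Mathlib

open Set

/-- The compact subsets of `S`. -/
def Kpt (S : Type*) [TopologicalSpace S] := {C : Set S // IsCompact C}

/-- `∼𝒟 = {C̃ ∈ K(S) : C̃ ∩ C ≠ ∅ for every C ∈ 𝒟}`. -/
def tilde {S : Type*} [TopologicalSpace S] (D : Set (Kpt S)) : Set (Kpt S) :=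
  {Ct | ∀ C ∈ D, (Ct.1 ∩ C.1).Nonempty}

/-- `C'` is a compact neighborhood of `C`: it contains an open set containing `C`. -/
def IsCpctNbhd {S : Type*} [TopologicalSpace S] (C C' : Kpt S) : Prop :=
  ∃ O : Set S, IsOpen O ∧ C.1 ⊆ O ∧ O ⊆ C'.1

theorem stmt4 {S : Type*} [TopologicalSpace S] [CompactSpace S] [T2Space S]
    (D : Set (Kpt S)) :
    D = tilde (tilde D) ↔ ∀ C : Kpt S, (C ∈ D ↔ ∀ C' : Kpt S, IsCpctNbhd C C' → C' ∈ D) := by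
  constructor
  · intro h C
    constructor
    · rintro hC C' ⟨O, hO, hCO, hOC'⟩
      rw [h]
      intro X hX
      obtain ⟨x, hxX, hxC⟩ := hX C hC
      exact ⟨x, hOC' (hCO hxC), hxX⟩
    · intro hC
      rw [h]
      intro X hX
      by_contra hempty
      rw [Set.not_nonempty_iff_eq_empty, ← Set.disjoint_iff_inter_eq_empty] at hempty
      obtain ⟨U, V, hU, hV, hCU, hXV, hUV⟩ :=
        SeparatedNhds.of_isCompact_isCompact C.2 X.2 hempty
      have hclU : IsCompact (closure U) := (isClosed_closure).isCompact
      have hmem : (⟨closure U, hclU⟩ : Kpt S) ∈ D :=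
        hC ⟨closure U, hclU⟩ ⟨U, hU, hCU, subset_closure⟩
      obtain ⟨y, hyX, hyU⟩ := hX _ hmem
      have : y ∈ V := hXV hyX
      have hdisj : Disjoint (closure U) V := hUV.closure_left hV
      exact hdisj.ne_of_mem hyU this rfl
  · intro h
    ext C
    constructor
    · intro hC X hX
      obtain ⟨x, hx1, hx2⟩ := hX C hC
      exact ⟨x, hx2, hx1⟩
    · intro hC
      rw [h C]
      rintro C' ⟨O, hO, hCO, hOC'⟩
      by_contra hC'D
      have hKmem : (⟨Oᶜ, hO.isClosed_compl.isCompact⟩ : Kpt S) ∈ tilde D := by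
        intro Dd hDd
        by_contra hempty
        rw [Set.not_nonempty_iff_eq_empty, ← Set.disjoint_iff_inter_eq_empty,
          Set.disjoint_compl_left_iff_subset] at hempty
        exact hC'D ((h Dd).mp hDd C' ⟨O, hO, hempty, hOC'⟩)
      obtain ⟨x, hx1, hx2⟩ := hC _ hKmem
      exact hx2 (hCO hx1)
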